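/- For every integer n ≥ 4, the semigroup ORCP_n is not right abundant: there exists α ∈ ORCP_n such that no idempotent ε ∈ ORCP_n (i.e., εε = ε) satisfies α R* ε. -/

import Mathlib

/-- A partial transformation of the chain `[n] = {1,…,n}`, encoded as a map
`ℕ → Option ℕ`: `α x = some y` means `x ∈ dom α` and `xα = y`. -/
def IsPT (n : ℕ) (α : ℕ → Option ℕ) : Prop :=
  ∀ x y, α x = some y → x ∈ Set.Icc 1 n ∧ y ∈ Set.Icc 1 n

/-- Composition of partial transformations: apply `α` first, then `β`. -/
def pcomp (α β : ℕ → Option ℕ) : ℕ → Option ℕ := fun x => (α x).bind β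

/-- `α` is a contraction: `|xα − yα| ≤ |x − y|` on its domain. -/
def IsContraction (α : ℕ → Option ℕ) : Prop :=
  ∀ x y a b, α x = some a → α y = some b → Nat.dist a b ≤ Nat.dist x y

def IsOrderPreserving (α : ℕ → Option ℕ) : Prop :=
  ∀ x y a b, α x = some a → α y = some b → x ≤ y → a ≤ b

def IsOrderReversing (α : ℕ → Option ℕ) : Prop :=
  ∀ x y a b, α x = some a → α y = some b → x ≤ y → b ≤ a

/-- `CP n`: the partial contractions of `[n]`. -/
def CP (n : ℕ) (α : ℕ → Option ℕ) : Prop := IsPT n α ∧ IsContraction α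

/-- `OCP n`: the order preserving partial contractions of `[n]`. -/
def OCP (n : ℕ) (α : ℕ → Option ℕ) : Prop := CP n α ∧ IsOrderPreserving α

/-- `ORCP n`: the order preserving or order reversing partial contractions of `[n]`. -/
def ORCP (n : ℕ) (α : ℕ → Option ℕ) : Prop :=
  CP n α ∧ (IsOrderPreserving α ∨ IsOrderReversing α)

/-- The image of a partial transformation. -/
def img (α : ℕ → Option ℕ) : Set ℕ := {y | ∃ x, α x = some y}

/-- The kernel of a partial transformation:
`{(x,y) ∈ dom α × dom α : xα = yα}`. -/
def pker (α : ℕ → Option ℕ) : Set (ℕ × ℕ) :=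
  {p | α p.1 ≠ none ∧ α p.1 = α p.2}

/-- The starred Green's relation `L*` relative to the class `S`:
`α L* β` iff for all `γ, δ ∈ S`, `αγ = αδ ⟺ βγ = βδ`. -/
def LStar (S : (ℕ → Option ℕ) → Prop) (α β : ℕ → Option ℕ) : Prop :=
  ∀ γ δ, S γ → S δ → (pcomp α γ = pcomp α δ ↔ pcomp β γ = pcomp β δ)

/-- The starred Green's relation `R*` relative to the class `S`:
`α R* β` iff for all `γ, δ ∈ S`, `γα = δα ⟺ γβ = δβ`. -/
def RStar (S : (ℕ → Option ℕ) → Prop) (α β : ℕ → Option ℕ) : Prop :=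
  ∀ γ δ, S γ → S δ → (pcomp γ α = pcomp δ α ↔ pcomp γ β = pcomp δ β)

/-- The witness: `1↦1, 2↦2, 3↦2, 4↦3`. -/
def Awit : ℕ → Option ℕ := fun x =>
  if x = 1 then some 1 else if x = 2 then some 2 else if x = 3 then some 2
  else if x = 4 then some 3 else none

lemma comp_eq_iff_single (β : ℕ → Option ℕ) (x : ℕ) :
    (pcomp (fun z => if z = x then some x else none) β
      = pcomp (fun _ : ℕ => none) β) ↔ β x = none := by
  constructor
  · intro h
    have := congrFun h x
    simpa [pcomp] using this
  · intro h
    funext z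
    by_cases hz : z = x <;> simp [pcomp, hz, h]

lemma comp_eq_iff_pair (β : ℕ → Option ℕ) {x y : ℕ} (hxy : x ≠ y) :
    (pcomp (fun z => if z = x then some x else if z = y then some y else none) β
      = pcomp (fun z => if z = x then some x else if z = y then some x else none) β)
      ↔ β y = β x := by
  have hyx : ¬ (y = x) := fun h => hxy h.symm
  constructor
  · intro h
    have := congrFun h y
    simpa [pcomp, hyx] using this
  · intro h
    funext z
    by_cases h1 : z = x
    · simp [pcomp, h1]
    · by_cases h2 : z = y <;> simp [pcomp, h1, h2, hyx, h]

lemma orcp_none (n : ℕ) : ORCP n (fun _ => none) := by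
  refine ⟨⟨fun x y h => by simp at h, fun x y a b hx _ => by simp at hx⟩,
    Or.inl fun x y a b hx _ _ => by simp at hx⟩

lemma orcp_single (n x : ℕ) (h1 : 1 ≤ x) (h2 : x ≤ n) :
    ORCP n (fun z => if z = x then some x else none) := by
  refine ⟨⟨?_, ?_⟩, Or.inl ?_⟩
  · intro z w h
    simp only [Set.mem_Icc]
    beta_reduce at h
    split_ifs at h with hz
    injection h with h'; omega
  · intro z w a b hz hw
    beta_reduce at hz hw
    split_ifs at hz hw <;> simp_all
  · intro z w a b hz hw _
    beta_reduce at hz hw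
    split_ifs at hz hw <;> simp_all

lemma orcp_two (n x y u v : ℕ) (hx1 : 1 ≤ x) (hxy : x < y) (hyn : y ≤ n)
    (hu1 : 1 ≤ u) (hun : u ≤ n) (hv1 : 1 ≤ v) (hvn : v ≤ n)
    (hd : Nat.dist u v ≤ Nat.dist x y) (hm : u ≤ v) :
    ORCP n (fun z => if z = x then some u else if z = y then some v else none) := by
  refine ⟨⟨?_, ?_⟩, Or.inl ?_⟩
  · intro z w h
    simp only [Set.mem_Icc]
    beta_reduce at h
    split_ifs at h with h1 h2
    · injection h with h'; omega
    · injection h with h'; omega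
  · intro z w a b hz hw
    have hd' : Nat.dist v u ≤ Nat.dist y x := by
      rwa [Nat.dist_comm v u, Nat.dist_comm y x]
    beta_reduce at hz hw
    split_ifs at hz hw <;> simp_all
  · intro z w a b hz hw hzw
    beta_reduce at hz hw
    split_ifs at hz hw <;> simp_all <;> omega

lemma orcp_Awit (n : ℕ) (hn : 4 ≤ n) : ORCP n Awit := by
  refine ⟨⟨?_, ?_⟩, Or.inl ?_⟩
  · intro x y h
    simp only [Awit] at h
    simp only [Set.mem_Icc]
    split_ifs at h <;> (try injection h with h') <;> omega
  · intro x y a b hx hy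
    simp only [Awit] at hx hy
    split_ifs at hx hy <;> simp_all [Nat.dist] <;> omega
  · intro x y a b hx hy hxy
    simp only [Awit] at hx hy
    split_ifs at hx hy <;> simp_all <;> omega

/-- For `n ≥ 4`, `ORCP n` is not right abundant: some `R*`-class has no idempotent. -/
theorem ORCP_not_right_abundant (n : ℕ) (hn : 4 ≤ n) :
    ∃ α : ℕ → Option ℕ, ORCP n α ∧
      ∀ ε : ℕ → Option ℕ, ORCP n ε → pcomp ε ε = ε → ¬ RStar (ORCP n) α ε := by
  refine ⟨Awit, orcp_Awit n hn, ?_⟩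
  intro ε hε hid hR
  -- Step 1: ε has the same domain as Awit.
  have hdom : ∀ x, ε x = none ↔ Awit x = none := by
    intro x
    by_cases hx : 1 ≤ x ∧ x ≤ n
    · have h := hR _ _ (orcp_single n x hx.1 hx.2) (orcp_none n)
      rw [comp_eq_iff_single, comp_eq_iff_single] at h
      exact h.symm
    · have hA : Awit x = none := by
        simp only [Awit]; split_ifs <;> first | rfl | (exfalso; omega)
      have hE : ε x = none := by
        cases h : ε x with
        | none => rfl
        | some w =>
          exact absurd (hε.1.1 x w h).1 (by simpa [Set.mem_Icc] using hx)
      simp [hA, hE]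
  -- Step 2: ε has the same kernel as Awit on [4].
  have key : ∀ p q : ℕ, 1 ≤ p → p < q → q ≤ 4 → (ε q = ε p ↔ Awit q = Awit p) := by
    intro p q h1 h2 h3
    have h := hR _ _
      (orcp_two n p q p q h1 h2 (by omega) h1 (by omega) (by omega) (by omega)
        le_rfl (le_of_lt h2))
      (orcp_two n p q p p h1 h2 (by omega) h1 (by omega) h1 (by omega)
        (by simp [Nat.dist_self]) le_rfl)
    rw [comp_eq_iff_pair Awit (by omega), comp_eq_iff_pair ε (by omega)] at h
    exact h.symm
  have e23 : ε 3 = ε 2 := (key 2 3 (by omega) (by omega) (by omega)).2 (by rfl)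
  have e12 : ε 2 ≠ ε 1 := fun h => by
    have := (key 1 2 (by omega) (by omega) (by omega)).1 h
    simp [Awit] at this
  have e14 : ε 4 ≠ ε 1 := fun h => by
    have := (key 1 4 (by omega) (by omega) (by omega)).1 h
    simp [Awit] at this
  have e34 : ε 4 ≠ ε 3 := fun h => by
    have := (key 3 4 (by omega) (by omega) (by omega)).1 h
    simp [Awit] at this
  -- Step 3: extract the values of ε on {1,2,3,4}.
  have hsome : ∀ x, Awit x ≠ none → ∃ a, ε x = some a := by
    intro x hx
    cases h : ε x with
    | none => exact absurd ((hdom x).1 h) hx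
    | some a => exact ⟨a, rfl⟩
  obtain ⟨a, ha⟩ := hsome 1 (by simp [Awit])
  obtain ⟨b, hb⟩ := hsome 2 (by simp [Awit])
  obtain ⟨c, hc⟩ := hsome 4 (by simp [Awit])
  have hb3 : ε 3 = some b := e23.trans hb
  have hab : a ≠ b := fun h => e12 (by rw [ha, hb, h])
  have hac : a ≠ c := fun h => e14 (by rw [ha, hc, h])
  have hbc : b ≠ c := fun h => e34 (by rw [hb3, hc, h])
  -- Step 4: idempotency fixes image points.
  have fix : ∀ t s, ε t = some s → ε s = some s := by
    intro t s h
    have := congrFun hid t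
    simpa [pcomp, h] using this
  have fa := fix 1 a ha
  have fb := fix 2 b hb
  have fc := fix 4 c hc
  have hmem : ∀ s, ε s = some s → s = 1 ∨ s = 2 ∨ s = 3 ∨ s = 4 := by
    intro s hs
    by_contra hcon
    push_neg at hcon
    have hAs : Awit s = none := by
      simp [Awit, hcon.1, hcon.2.1, hcon.2.2.1, hcon.2.2.2]
    have : ε s = none := (hdom s).2 hAs
    rw [hs] at this; exact Option.some_ne_none s this
  -- Step 5: pin down a = 1 and c = 4.
  have ha1 : a = 1 := by
    rcases hmem a fa with h | h | h | h
    · exact h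
    · subst h; exact absurd (Option.some.inj (fa.symm.trans hb)) hab
    · subst h; exact absurd (Option.some.inj (fa.symm.trans hb3)) hab
    · subst h; exact absurd (Option.some.inj (fa.symm.trans hc)) hac
  have hc4 : c = 4 := by
    rcases hmem c fc with h | h | h | h
    · subst h; exact absurd (Option.some.inj (fc.symm.trans ha)) (Ne.symm hac)
    · subst h; exact absurd (Option.some.inj (fc.symm.trans hb)) (Ne.symm hbc)
    · subst h; exact absurd (Option.some.inj (fc.symm.trans hb3)) (Ne.symm hbc)
    · exact h
  -- Step 6: contraction gives a contradiction.
  have hb1 : 1 ≤ b := (Set.mem_Icc.1 (hε.1.1 2 b hb).2).1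
  have d12 : Nat.dist a b ≤ Nat.dist 1 2 := hε.1.2 1 2 a b ha hb
  have d34 : Nat.dist b c ≤ Nat.dist 3 4 := hε.1.2 3 4 b c hb3 hc
  rw [ha1] at d12 hab
  rw [hc4] at d34
  simp [Nat.dist] at d12 d34
  omega
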